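/- (Inverse of M.) Let Φ = (w₁,w₂) : Ω → Ω' be a biholomorphism between open subsets of ℂ² with inverse Ψ = (x,y) : Ω' → Ω. Then for every p ∈ Ω, the matrix M(w₁,w₂;x,y)(p) is invertible and M(w₁,w₂;x,y)(p)⁻¹ = M(x,y;w₁,w₂)(Φ(p)), i.e. M(w₁,w₂;x,y)(p) · M(x,y;w₁,w₂)(Φ(p)) = I₄, where M(x,y;w₁,w₂) is the matrix M formed from the partial derivatives of the inverse map with respect to (w₁,w₂). -/

import Mathlib

open Complex Matrix

noncomputable section

/-- Partial derivative in the first complex variable. -/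
def pdx (f : ℂ × ℂ → ℂ) (p : ℂ × ℂ) : ℂ := deriv (fun x => f (x, p.2)) p.1

/-- Partial derivative in the second complex variable. -/
def pdy (f : ℂ × ℂ → ℂ) (p : ℂ × ℂ) : ℂ := deriv (fun y => f (p.1, y)) p.2

/-- The Jacobian `J(u₁,u₂) = ∂ₓu₁·∂ᵧu₂ − ∂ₓu₂·∂ᵧu₁`. -/
def Jac (u₁ u₂ : ℂ × ℂ → ℂ) (p : ℂ × ℂ) : ℂ :=
  pdx u₁ p * pdy u₂ p - pdx u₂ p * pdy u₁ p

/-- The GL(3) derivative `{u₁,u₂;x,y}ₓ`. -/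
def brX (u₁ u₂ : ℂ × ℂ → ℂ) (p : ℂ × ℂ) : ℂ :=
  (pdx u₁ p * pdx (pdx u₂) p - pdx u₂ p * pdx (pdx u₁) p) / Jac u₁ u₂ p

/-- The GL(3) derivative `{u₁,u₂;x,y}ᵧ`. -/
def brY (u₁ u₂ : ℂ × ℂ → ℂ) (p : ℂ × ℂ) : ℂ :=
  -(pdy u₁ p * pdy (pdy u₂) p - pdy u₂ p * pdy (pdy u₁) p) / Jac u₁ u₂ p

/-- The GL(3) derivative `[u₁,u₂;x,y]ₓ`. -/
def sqX (u₁ u₂ : ℂ × ℂ → ℂ) (p : ℂ × ℂ) : ℂ :=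
  ((pdy u₁ p * pdx (pdx u₂) p - pdy u₂ p * pdx (pdx u₁) p)
      + 2 * (pdx u₁ p * pdx (pdy u₂) p - pdx u₂ p * pdx (pdy u₁) p)) / Jac u₁ u₂ p

/-- The GL(3) derivative `[u₁,u₂;x,y]ᵧ`. -/
def sqY (u₁ u₂ : ℂ × ℂ → ℂ) (p : ℂ × ℂ) : ℂ :=
  -((pdx u₁ p * pdy (pdy u₂) p - pdx u₂ p * pdy (pdy u₁) p)
      + 2 * (pdy u₁ p * pdx (pdy u₂) p - pdy u₂ p * pdx (pdy u₁) p)) / Jac u₁ u₂ p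

/-- The 4×4 matrix `M(w₁,w₂;x,y)` built from the first partial derivatives of
the holomorphic map `(w₁,w₂)`. -/
def Mmat (w₁ w₂ : ℂ × ℂ → ℂ) (p : ℂ × ℂ) : Matrix (Fin 4) (Fin 4) ℂ :=
  !![(pdx w₁ p) ^ 3, -(pdx w₂ p) ^ 3, (pdx w₁ p) ^ 2 * pdx w₂ p,
        -(pdx w₁ p) * (pdx w₂ p) ^ 2;
     -(pdy w₁ p) ^ 3, (pdy w₂ p) ^ 3, -(pdy w₁ p) ^ 2 * pdy w₂ p,
        (pdy w₁ p) * (pdy w₂ p) ^ 2;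
     3 * (pdx w₁ p) ^ 2 * pdy w₁ p, -3 * (pdx w₂ p) ^ 2 * pdy w₂ p,
        (pdx w₁ p) ^ 2 * pdy w₂ p + 2 * pdx w₁ p * pdx w₂ p * pdy w₁ p,
        -(pdx w₂ p) ^ 2 * pdy w₁ p - 2 * pdx w₁ p * pdx w₂ p * pdy w₂ p;
     -3 * pdx w₁ p * (pdy w₁ p) ^ 2, 3 * pdx w₂ p * (pdy w₂ p) ^ 2,
        -(pdx w₂ p) * (pdy w₁ p) ^ 2 - 2 * pdx w₁ p * pdy w₁ p * pdy w₂ p,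
        (pdx w₁ p) * (pdy w₂ p) ^ 2 + 2 * pdx w₂ p * pdy w₁ p * pdy w₂ p]

/-- The column vector of the four GL(3) derivatives of the pair `(u₁,u₂)`. -/
def Vvec (u₁ u₂ : ℂ × ℂ → ℂ) (p : ℂ × ℂ) : Fin 4 → ℂ :=
  ![brX u₁ u₂ p, brY u₁ u₂ p, sqX u₁ u₂ p, sqY u₁ u₂ p]


section Aux

lemma pdx_hasDeriv (f : ℂ × ℂ → ℂ) (p : ℂ × ℂ) (hf : DifferentiableAt ℂ f p) :
    HasDerivAt (fun t => f (t, p.2)) (fderiv ℂ f p (1, 0)) p.1 := by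
  have h := hf.hasFDerivAt.comp_hasDerivAt p.1
    ((hasDerivAt_id p.1).prodMk (hasDerivAt_const p.1 p.2))
  exact h

lemma pdy_hasDeriv (f : ℂ × ℂ → ℂ) (p : ℂ × ℂ) (hf : DifferentiableAt ℂ f p) :
    HasDerivAt (fun s => f (p.1, s)) (fderiv ℂ f p (0, 1)) p.2 := by
  have h := hf.hasFDerivAt.comp_hasDerivAt p.2
    ((hasDerivAt_const p.2 p.1).prodMk (hasDerivAt_id p.2))
  exact h

lemma fderiv_pair (f : ℂ × ℂ → ℂ) (p : ℂ × ℂ) (hf : DifferentiableAt ℂ f p) (u v : ℂ) :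
    fderiv ℂ f p (u, v) = pdx f p * u + pdy f p * v := by
  have h1 : deriv (fun t => f (t, p.2)) p.1 = fderiv ℂ f p (1, 0) :=
    (pdx_hasDeriv f p hf).deriv
  have h2 : deriv (fun s => f (p.1, s)) p.2 = fderiv ℂ f p (0, 1) :=
    (pdy_hasDeriv f p hf).deriv
  have huv : (u, v) = u • ((1:ℂ), (0:ℂ)) + v • ((0:ℂ), (1:ℂ)) := by
    simp [Prod.ext_iff]
  rw [huv, map_add, _root_.map_smul, _root_.map_smul, smul_eq_mul, smul_eq_mul]
  rw [pdx, pdy, h1, h2]; ring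

/-- Chain rule in the x-direction. -/
lemma chainX (g w₁ w₂ : ℂ × ℂ → ℂ) (p : ℂ × ℂ)
    (hg : DifferentiableAt ℂ g (w₁ p, w₂ p))
    (h1 : DifferentiableAt ℂ w₁ p) (h2 : DifferentiableAt ℂ w₂ p) :
    HasDerivAt (fun t => g (w₁ (t, p.2), w₂ (t, p.2)))
      (pdx g (w₁ p, w₂ p) * pdx w₁ p + pdy g (w₁ p, w₂ p) * pdx w₂ p) p.1 := by
  have hw1 : HasDerivAt (fun t => w₁ (t, p.2)) (pdx w₁ p) p.1 := by
    have := pdx_hasDeriv w₁ p h1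
    rwa [show fderiv ℂ w₁ p (1, 0) = pdx w₁ p from ((pdx_hasDeriv w₁ p h1).deriv).symm] at this
  have hw2 : HasDerivAt (fun t => w₂ (t, p.2)) (pdx w₂ p) p.1 := by
    have := pdx_hasDeriv w₂ p h2
    rwa [show fderiv ℂ w₂ p (1, 0) = pdx w₂ p from ((pdx_hasDeriv w₂ p h2).deriv).symm] at this
  have h := hg.hasFDerivAt.comp_hasDerivAt p.1 (hw1.prodMk hw2)
  rwa [fderiv_pair g (w₁ p, w₂ p) hg] at h

/-- Chain rule in the y-direction. -/
lemma chainY (g w₁ w₂ : ℂ × ℂ → ℂ) (p : ℂ × ℂ)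
    (hg : DifferentiableAt ℂ g (w₁ p, w₂ p))
    (h1 : DifferentiableAt ℂ w₁ p) (h2 : DifferentiableAt ℂ w₂ p) :
    HasDerivAt (fun s => g (w₁ (p.1, s), w₂ (p.1, s)))
      (pdx g (w₁ p, w₂ p) * pdy w₁ p + pdy g (w₁ p, w₂ p) * pdy w₂ p) p.2 := by
  have hw1 : HasDerivAt (fun s => w₁ (p.1, s)) (pdy w₁ p) p.2 := by
    have := pdy_hasDeriv w₁ p h1
    rwa [show fderiv ℂ w₁ p (0, 1) = pdy w₁ p from ((pdy_hasDeriv w₁ p h1).deriv).symm] at this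
  have hw2 : HasDerivAt (fun s => w₂ (p.1, s)) (pdy w₂ p) p.2 := by
    have := pdy_hasDeriv w₂ p h2
    rwa [show fderiv ℂ w₂ p (0, 1) = pdy w₂ p from ((pdy_hasDeriv w₂ p h2).deriv).symm] at this
  have h := hg.hasFDerivAt.comp_hasDerivAt p.2 (hw1.prodMk hw2)
  rwa [fderiv_pair g (w₁ p, w₂ p) hg] at h

set_option maxHeartbeats 1000000 in
/-- The purely algebraic core: if the Jacobian matrices are mutually inverse,
the two `M`-matrices multiply to the identity. -/
lemma Mmul (a b c d A B C D : ℂ)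
    (e1 : A*a + C*b = 1) (e2 : B*a + D*b = 0)
    (e3 : A*c + C*d = 0) (e4 : B*c + D*d = 1) :
    !![a^3, -b^3, a^2*b, -a*b^2;
       -c^3, d^3, -c^2*d, c*d^2;
       3*a^2*c, -3*b^2*d, a^2*d + 2*a*b*c, -b^2*c - 2*a*b*d;
       -3*a*c^2, 3*b*d^2, -b*c^2 - 2*a*c*d, a*d^2 + 2*b*c*d] *
    !![A^3, -B^3, A^2*B, -A*B^2;
       -C^3, D^3, -C^2*D, C*D^2;
       3*A^2*C, -3*B^2*D, A^2*D + 2*A*B*C, -B^2*C - 2*A*B*D;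
       -3*A*C^2, 3*B*D^2, -B*C^2 - 2*A*C*D, A*D^2 + 2*B*C*D] = 1 := by
  ext i j
  fin_cases i <;> fin_cases j <;>
    simp [Matrix.mul_apply, Fin.sum_univ_four, Matrix.one_apply]
  · linear_combination ((1) + (A*a + C*b) + (A*a + C*b)^2) * e1
  · linear_combination ((-1)*(B*a + D*b)^2) * e2
  · linear_combination ((B*a + D*b) + (A*a + C*b)*(B*a + D*b)) * e1 + ((1)) * e2
  · linear_combination ((-1)*(B*a + D*b)^2) * e1 + ((-1)*(B*a + D*b)) * e2
  · linear_combination ((-1)*(A*c + C*d)^2) * e3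
  · linear_combination ((1) + (B*c + D*d) + (B*c + D*d)^2) * e4
  · linear_combination ((-1)*(A*c + C*d)*(B*c + D*d)) * e3
  · linear_combination ((B*c + D*d)^2) * e3
  · linear_combination ((3)*(A*c + C*d) + (3)*(A*a + C*b)*(A*c + C*d)) * e1 + ((3)) * e3
  · linear_combination ((-3)*(B*a + D*b)*(B*c + D*d)) * e2
  · linear_combination ((B*c + D*d) + (2)*(B*a + D*b)*(A*c + C*d) + (A*a + C*b)*(B*c + D*d)) * e1 + ((2)*(A*c + C*d)) * e2 + ((1)) * e4
  · linear_combination ((-2)*(B*a + D*b)*(B*c + D*d)) * e1 + ((-2)*(B*c + D*d) + (-1)*(B*a + D*b)*(A*c + C*d)) * e2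
  · linear_combination ((-3)*(A*c + C*d)^2) * e1 + ((-3)*(A*c + C*d)) * e3
  · linear_combination ((3)*(B*c + D*d)^2) * e2
  · linear_combination ((-2)*(A*c + C*d)*(B*c + D*d)) * e1 + ((-1)*(A*c + C*d)^2) * e2 + ((-2)*(B*c + D*d)) * e3
  · linear_combination ((B*c + D*d)^2) * e1 + ((2)*(A*c + C*d)*(B*c + D*d)) * e2 + ((1) + (B*c + D*d)) * e4

end Aux

/-- For a biholomorphism `Φ = (w₁,w₂)` with inverse `Ψ = (x,y)`,
the matrix `M(w₁,w₂;x,y)` is invertible with inverse `M(x,y;w₁,w₂)` at the image point. -/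
theorem statement6 (Ω Ω' : Set (ℂ × ℂ)) (hΩ : IsOpen Ω) (hΩ' : IsOpen Ω')
    (w₁ w₂ x y : ℂ × ℂ → ℂ)
    (hw₁ : DifferentiableOn ℂ w₁ Ω) (hw₂ : DifferentiableOn ℂ w₂ Ω)
    (hx : DifferentiableOn ℂ x Ω') (hy : DifferentiableOn ℂ y Ω')
    (hmaps : ∀ p ∈ Ω, (w₁ p, w₂ p) ∈ Ω')
    (hmaps' : ∀ q ∈ Ω', (x q, y q) ∈ Ω)
    (hleft : ∀ p ∈ Ω, (x (w₁ p, w₂ p), y (w₁ p, w₂ p)) = p)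
    (hright : ∀ q ∈ Ω', (w₁ (x q, y q), w₂ (x q, y q)) = q) :
    ∀ p ∈ Ω,
      IsUnit (Mmat w₁ w₂ p) ∧
      (Mmat w₁ w₂ p)⁻¹ = Mmat x y (w₁ p, w₂ p) ∧
      Mmat w₁ w₂ p * Mmat x y (w₁ p, w₂ p) = 1 := by
  intro p hp
  have hq : (w₁ p, w₂ p) ∈ Ω' := hmaps p hp
  have hdw₁ : DifferentiableAt ℂ w₁ p := hw₁.differentiableAt (hΩ.mem_nhds hp)
  have hdw₂ : DifferentiableAt ℂ w₂ p := hw₂.differentiableAt (hΩ.mem_nhds hp)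
  have hdx : DifferentiableAt ℂ x (w₁ p, w₂ p) := hx.differentiableAt (hΩ'.mem_nhds hq)
  have hdy : DifferentiableAt ℂ y (w₁ p, w₂ p) := hy.differentiableAt (hΩ'.mem_nhds hq)
  -- membership of nearby horizontal / vertical points
  have hmemX : ∀ᶠ t in nhds p.1, (t, p.2) ∈ Ω := by
    have hc : Continuous (fun t : ℂ => (t, p.2)) := continuous_id.prodMk continuous_const
    have : (p.1, p.2) ∈ Ω := by simpa using hp
    exact hc.continuousAt.preimage_mem_nhds (hΩ.mem_nhds this)
  have hmemY : ∀ᶠ s in nhds p.2, (p.1, s) ∈ Ω := by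
    have hc : Continuous (fun s : ℂ => (p.1, s)) := continuous_const.prodMk continuous_id
    have : (p.1, p.2) ∈ Ω := by simpa using hp
    exact hc.continuousAt.preimage_mem_nhds (hΩ.mem_nhds this)
  -- the four chain-rule identities
  have e1 : pdx x (w₁ p, w₂ p) * pdx w₁ p + pdy x (w₁ p, w₂ p) * pdx w₂ p = 1 := by
    have hch := chainX x w₁ w₂ p hdx hdw₁ hdw₂
    have hev : (fun t => x (w₁ (t, p.2), w₂ (t, p.2))) =ᶠ[nhds p.1] fun t => t :=
      hmemX.mono fun t ht => congrArg Prod.fst (hleft (t, p.2) ht)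
    exact hch.unique ((hasDerivAt_id p.1).congr_of_eventuallyEq hev)
  have e2 : pdx y (w₁ p, w₂ p) * pdx w₁ p + pdy y (w₁ p, w₂ p) * pdx w₂ p = 0 := by
    have hch := chainX y w₁ w₂ p hdy hdw₁ hdw₂
    have hev : (fun t => y (w₁ (t, p.2), w₂ (t, p.2))) =ᶠ[nhds p.1] fun _ => p.2 :=
      hmemX.mono fun t ht => congrArg Prod.snd (hleft (t, p.2) ht)
    exact hch.unique ((hasDerivAt_const p.1 p.2).congr_of_eventuallyEq hev)
  have e3 : pdx x (w₁ p, w₂ p) * pdy w₁ p + pdy x (w₁ p, w₂ p) * pdy w₂ p = 0 := by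
    have hch := chainY x w₁ w₂ p hdx hdw₁ hdw₂
    have hev : (fun s => x (w₁ (p.1, s), w₂ (p.1, s))) =ᶠ[nhds p.2] fun _ => p.1 :=
      hmemY.mono fun s hs => congrArg Prod.fst (hleft (p.1, s) hs)
    exact hch.unique ((hasDerivAt_const p.2 p.1).congr_of_eventuallyEq hev)
  have e4 : pdx y (w₁ p, w₂ p) * pdy w₁ p + pdy y (w₁ p, w₂ p) * pdy w₂ p = 1 := by
    have hch := chainY y w₁ w₂ p hdy hdw₁ hdw₂
    have hev : (fun s => y (w₁ (p.1, s), w₂ (p.1, s))) =ᶠ[nhds p.2] fun s => s :=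
      hmemY.mono fun s hs => congrArg Prod.snd (hleft (p.1, s) hs)
    exact hch.unique ((hasDerivAt_id p.2).congr_of_eventuallyEq hev)
  have hmul : Mmat w₁ w₂ p * Mmat x y (w₁ p, w₂ p) = 1 := by
    show _ * _ = _
    rw [Mmat, Mmat]
    exact Mmul (pdx w₁ p) (pdx w₂ p) (pdy w₁ p) (pdy w₂ p)
      (pdx x (w₁ p, w₂ p)) (pdx y (w₁ p, w₂ p)) (pdy x (w₁ p, w₂ p)) (pdy y (w₁ p, w₂ p))
      e1 e2 e3 e4
  refine ⟨⟨⟨Mmat w₁ w₂ p, Mmat x y (w₁ p, w₂ p), hmul, mul_eq_one_comm.mp hmul⟩, rfl⟩,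
    Matrix.inv_eq_right_inv hmul, hmul⟩
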